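/- Let m, n be positive integers, σ : {1,…,n} → {1,…,m}, let a_1,…,a_n, ħ be nonzero complex numbers and 0 < |q| < 1, and define Φ_f := ∏_{i'=1}^{m-1} ∏_{(j,k): j≠k, σ(j)≤i', σ(k)≤i'} [Φ(q a_j/a_k)Φ(a_j/a_k) / (Φ(ħ^{-1}a_j/a_k)Φ(qħ a_j/a_k))] · ∏_{(k,l): σ(k)<σ(l)} [Φ(q a_k/a_l)/Φ(ħ^{-1}a_k/a_l)], where the first product is over ordered pairs. Then for every i ∈ {1,…,n}, the value of Φ_f with a_i replaced by q a_i, divided by Φ_f, equals ∏_{j: σ(j)<σ(i)} (1 − a_j/a_i)/(1 − a_j/(qħ a_i)) · ∏_{j: σ(j)>σ(i)} (1 − ħ^{-1}a_i/a_j)/(1 − q a_i/a_j), whenever all occurring denominators are nonzero. -/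

import Mathlib

/-- `Φ(x) = ∏_{i≥0} (1 - x qⁱ)`. -/
noncomputable def Phi (q x : ℂ) : ℂ := ∏' i : ℕ, (1 - x * q ^ i)

/-- The explicit infinite product `Φ_f = Φ((q - ħ⁻¹)𝒫|_f)` (with the constant diagonal
factors removed) attached to the fixed point `σ` of a separated bow variety all of whose
D5 branes have weight one.  Indices are zero-based: the `i'`-th factor of the outer
product (for `i' ∈ {0,…,m-2}`) corresponds to the paper's index `i'+1`, and `σ j`
corresponds to the paper's value `σ(j) = (σ j) + 1`. -/
noncomputable def PhiSep {m n : ℕ} (q h : ℂ) (σ : Fin n → Fin m) (a : Fin n → ℂ) : ℂ :=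
  (∏ i' ∈ Finset.range (m - 1), ∏ j : Fin n, ∏ k : Fin n,
      if j ≠ k ∧ (σ j : ℕ) ≤ i' ∧ (σ k : ℕ) ≤ i' then
        Phi q (q * (a j / a k)) * Phi q (a j / a k) /
          (Phi q (h⁻¹ * (a j / a k)) * Phi q (q * h * (a j / a k)))
      else 1) *
    ∏ k : Fin n, ∏ l : Fin n,
      if σ k < σ l then Phi q (q * (a k / a l)) / Phi q (h⁻¹ * (a k / a l)) else 1

lemma multipliable_phi {q : ℂ} (hq : ‖q‖ < 1) (x : ℂ) :
    Multipliable fun i : ℕ => 1 - x * q ^ i := by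
  by_cases hz : ∃ n : ℕ, 1 - x * q ^ n = 0
  · obtain ⟨n, hn⟩ := hz
    refine ⟨0, ?_⟩
    rw [HasProd]
    refine tendsto_const_nhds.congr' ?_
    filter_upwards [Filter.eventually_ge_atTop ({n} : Finset ℕ)] with s hs
    exact (Finset.prod_eq_zero (hs (Finset.mem_singleton_self n)) hn).symm
  · push_neg at hz
    have hsum : Summable fun n : ℕ => Complex.log (1 - x * q ^ n) := by
      have hg : Summable fun n : ℕ => (3 / 2 : ℝ) * (‖x‖ * ‖q‖ ^ n) :=
        ((summable_geometric_of_norm_lt_one (K := ℝ) (x := ‖q‖) (by simpa using hq)).mul_left ‖x‖).mul_left (3 / 2 : ℝ)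
      refine Summable.of_norm_bounded_eventually_nat hg ?_
      have ht : Filter.Tendsto (fun n : ℕ => ‖x‖ * ‖q‖ ^ n)
          Filter.atTop (nhds 0) := by
        have := tendsto_pow_atTop_nhds_zero_of_norm_lt_one (x := (q : ℂ)) (by simpa using hq)
        have h2 := (this.norm).const_mul (‖x‖)
        simpa using h2
      filter_upwards [ht.eventually_le_const (by norm_num : (0:ℝ) < 1/2)] with n hn
      have hb : ‖-(x * q ^ n)‖ ≤ 1 / 2 := by
        simpa [map_mul, map_pow] using hn
      have := Complex.norm_log_one_add_half_le_self hb
      rw [show (1 : ℂ) + -(x * q ^ n) = 1 - x * q ^ n by ring] at this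
      refine this.trans ?_
      simp [map_mul, map_pow]
    have hp := hsum.hasSum.cexp
    have he : (fun n : ℕ => Complex.exp (Complex.log (1 - x * q ^ n))) =
        fun n : ℕ => 1 - x * q ^ n := funext fun n => Complex.exp_log (hz n)
    rw [Function.comp_def, he] at hp
    exact ⟨_, hp⟩

lemma phi_shift {q : ℂ} (hq : ‖q‖ < 1) (x : ℂ) :
    Phi q x = (1 - x) * Phi q (q * x) := by
  have hm' : Multipliable fun n : ℕ => 1 - x * q ^ (n + 1) :=
    (multipliable_phi hq (q * x)).congr fun b => by rw [pow_succ]; ring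
  have h0 := tprod_eq_zero_mul' (f := fun i : ℕ => 1 - x * q ^ i) hm'
  rw [Phi, h0]
  simp only [pow_zero, mul_one]
  congr 1
  rw [Phi]
  exact tprod_congr fun b => by rw [pow_succ]; ring

lemma phi_factor_ne {q x : ℂ} (hq : ‖q‖ < 1) (h : Phi q x ≠ 0) :
    1 - x ≠ 0 ∧ Phi q (q * x) ≠ 0 := by
  rw [phi_shift hq x] at h
  exact mul_ne_zero_iff.mp h

lemma G1 {q h r : ℂ} (hq : ‖q‖ < 1)
    (h3 : Phi q (h⁻¹ * r) ≠ 0) (hd : 1 - q * r ≠ 0) :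
    Phi q (q * (q * r)) / Phi q (h⁻¹ * (q * r)) =
      (1 - h⁻¹ * r) / (1 - q * r) * (Phi q (q * r) / Phi q (h⁻¹ * r)) := by
  have e1 : Phi q (q * r) = (1 - q * r) * Phi q (q * (q * r)) := phi_shift hq _
  have e3 : Phi q (h⁻¹ * r) = (1 - h⁻¹ * r) * Phi q (h⁻¹ * (q * r)) := by
    have e := phi_shift hq (h⁻¹ * r)
    rwa [show q * (h⁻¹ * r) = h⁻¹ * (q * r) by ring] at e
  obtain ⟨hne, hX2⟩ := mul_ne_zero_iff.mp (e3 ▸ h3)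
  rw [e1, e3, div_mul_div_comm,
    show (1 - h⁻¹ * r) * ((1 - q * r) * Phi q (q * (q * r))) =
      ((1 - q * r) * (1 - h⁻¹ * r)) * Phi q (q * (q * r)) by ring,
    show (1 - q * r) * ((1 - h⁻¹ * r) * Phi q (h⁻¹ * (q * r))) =
      ((1 - q * r) * (1 - h⁻¹ * r)) * Phi q (h⁻¹ * (q * r)) by ring,
    mul_div_mul_left _ _ (mul_ne_zero hd hne)]

lemma G2 {q h r : ℂ} (hq : ‖q‖ < 1) (hq0 : q ≠ 0)
    (h3 : Phi q (h⁻¹ * r) ≠ 0) (hd : 1 - h⁻¹ * (r / q) ≠ 0) :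
    Phi q (q * (r / q)) / Phi q (h⁻¹ * (r / q)) =
      (1 - r) / (1 - h⁻¹ * (r / q)) * (Phi q (q * r) / Phi q (h⁻¹ * r)) := by
  have e5 : q * (r / q) = r := by field_simp
  have e2 : Phi q r = (1 - r) * Phi q (q * r) := phi_shift hq _
  have e8 : Phi q (h⁻¹ * (r / q)) = (1 - h⁻¹ * (r / q)) * Phi q (h⁻¹ * r) := by
    have e := phi_shift hq (h⁻¹ * (r / q))
    rwa [show q * (h⁻¹ * (r / q)) = h⁻¹ * (q * (r / q)) by ring, e5] at e
  rw [e5, e2, e8, div_mul_div_comm]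

set_option maxHeartbeats 1000000 in
lemma pair_eq {q h r s : ℂ} (hq : ‖q‖ < 1) (hq0 : q ≠ 0) (hh0 : h ≠ 0)
    (hr0 : r ≠ 0) (hs : s = r⁻¹)
    (hA1 : Phi q (h⁻¹ * (q * r)) ≠ 0) (hA2 : Phi q (q * h * (q * r)) ≠ 0)
    (hA3 : Phi q (h⁻¹ * (s / q)) ≠ 0) (hA4 : Phi q (q * h * (s / q)) ≠ 0)
    (ha1 : Phi q (q * r) ≠ 0) (ha2 : Phi q r ≠ 0)
    (ha3 : Phi q (h⁻¹ * r) ≠ 0) (ha4 : Phi q (q * h * r) ≠ 0)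
    (hb1 : Phi q (q * s) ≠ 0) (hb2 : Phi q s ≠ 0)
    (hb3 : Phi q (h⁻¹ * s) ≠ 0) (hb4 : Phi q (q * h * s) ≠ 0) :
    Phi q (q * (q * r)) * Phi q (q * r) / (Phi q (h⁻¹ * (q * r)) * Phi q (q * h * (q * r))) *
      (Phi q (q * (s / q)) * Phi q (s / q) /
        (Phi q (h⁻¹ * (s / q)) * Phi q (q * h * (s / q)))) =
    Phi q (q * r) * Phi q r / (Phi q (h⁻¹ * r) * Phi q (q * h * r)) *
      (Phi q (q * s) * Phi q s / (Phi q (h⁻¹ * s) * Phi q (q * h * s))) := by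
  have hqs : q * (s / q) = s := by field_simp
  have er1 : Phi q (q * r) = (1 - q * r) * Phi q (q * (q * r)) := phi_shift hq _
  have er2 : Phi q r = (1 - r) * ((1 - q * r) * Phi q (q * (q * r))) := by
    rw [phi_shift hq r, er1]
  have er3 : Phi q (h⁻¹ * r) = (1 - h⁻¹ * r) * Phi q (h⁻¹ * (q * r)) := by
    have e := phi_shift hq (h⁻¹ * r)
    rwa [show q * (h⁻¹ * r) = h⁻¹ * (q * r) by ring] at e
  have er4 : Phi q (q * h * r) = (1 - q * h * r) * Phi q (q * h * (q * r)) := by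
    have e := phi_shift hq (q * h * r)
    rwa [show q * (q * h * r) = q * h * (q * r) by ring] at e
  have es7 : Phi q s = (1 - s) * Phi q (q * s) := phi_shift hq _
  have es5 : Phi q (q * (s / q)) = (1 - s) * Phi q (q * s) := by rw [hqs, es7]
  have es6 : Phi q (s / q) = (1 - s / q) * ((1 - s) * Phi q (q * s)) := by
    rw [phi_shift hq (s / q), hqs, es7]
  have es8 : Phi q (h⁻¹ * (s / q)) = (1 - h⁻¹ * (s / q)) * Phi q (h⁻¹ * s) := by
    have e := phi_shift hq (h⁻¹ * (s / q))
    rwa [show q * (h⁻¹ * (s / q)) = h⁻¹ * (q * (s / q)) by ring, hqs] at e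
  have es9 : Phi q (q * h * (s / q)) = (1 - h * s) * Phi q (q * h * s) := by
    have e := phi_shift hq (h * s)
    rw [show q * (h * s) = q * h * s by ring] at e
    rw [show q * h * (s / q) = h * s by field_simp]
    exact e
  -- nonzero consequences
  obtain ⟨n1, hX1⟩ := mul_ne_zero_iff.mp (er1 ▸ ha1)
  obtain ⟨n2, -⟩ := mul_ne_zero_iff.mp (er2 ▸ ha2)
  obtain ⟨n3, hX2⟩ := mul_ne_zero_iff.mp (er3 ▸ ha3)
  obtain ⟨n4, hX3⟩ := mul_ne_zero_iff.mp (er4 ▸ ha4)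
  obtain ⟨n7, hY1⟩ := mul_ne_zero_iff.mp (es7 ▸ hb2)
  obtain ⟨n8, hY2⟩ := mul_ne_zero_iff.mp (es8 ▸ hA3)
  obtain ⟨n9, hY3⟩ := mul_ne_zero_iff.mp (es9 ▸ hA4)
  rw [er2, er1, er3, er4, es5, es6, es8, es9, es7]
  rw [div_mul_div_comm, div_mul_div_comm,
    div_eq_div_iff (by apply_rules [mul_ne_zero]) (by apply_rules [mul_ne_zero])]
  subst hs
  field_simp
  ring

noncomputable def F1 {m n : ℕ} (q h : ℂ) (σ : Fin n → Fin m) (a : Fin n → ℂ)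
    (i' : ℕ) (j k : Fin n) : ℂ :=
  if j ≠ k ∧ (σ j : ℕ) ≤ i' ∧ (σ k : ℕ) ≤ i' then
    Phi q (q * (a j / a k)) * Phi q (a j / a k) /
      (Phi q (h⁻¹ * (a j / a k)) * Phi q (q * h * (a j / a k)))
  else 1

noncomputable def F2 {m n : ℕ} (q h : ℂ) (σ : Fin n → Fin m) (a : Fin n → ℂ)
    (k l : Fin n) : ℂ :=
  if σ k < σ l then Phi q (q * (a k / a l)) / Phi q (h⁻¹ * (a k / a l)) else 1

lemma PhiSep_eq {m n : ℕ} (q h : ℂ) (σ : Fin n → Fin m) (a : Fin n → ℂ) :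
    PhiSep q h σ a =
      (∏ i' ∈ Finset.range (m - 1), ∏ j : Fin n, ∏ k : Fin n, F1 q h σ a i' j k) *
        ∏ k : Fin n, ∏ l : Fin n, F2 q h σ a k l := rfl

lemma F1_diag {m n : ℕ} (q h : ℂ) (σ : Fin n → Fin m) (a : Fin n → ℂ) (i' : ℕ) (j : Fin n) :
    F1 q h σ a i' j j = 1 := by
  rw [F1, if_neg]; simp


set_option maxHeartbeats 1000000 in
lemma claimA {m n : ℕ} (q h : ℂ) (σ : Fin n → Fin m) (a A : Fin n → ℂ) (i : Fin n)
    (hq2 : ‖q‖ < 1) (hq0 : q ≠ 0) (hh0 : h ≠ 0) (ha : ∀ j, a j ≠ 0)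
    (hAi : A i = q * a i) (hAo : ∀ j, j ≠ i → A j = a j)
    (i' : ℕ) (hi' : i' ∈ Finset.range (m - 1))
    (hFa : ∀ j k : Fin n, F1 q h σ a i' j k ≠ 0)
    (hdA : ∀ j k : Fin n, j ≠ k → (σ j : ℕ) < m - 1 → (σ k : ℕ) < m - 1 →
      Phi q (h⁻¹ * (A j / A k)) ≠ 0 ∧ Phi q (q * h * (A j / A k)) ≠ 0) :
    (∏ j : Fin n, ∏ k : Fin n, F1 q h σ A i' j k) =
      ∏ j : Fin n, ∏ k : Fin n, F1 q h σ a i' j k := by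
  have hi'' : i' < m - 1 := Finset.mem_range.mp hi'
  -- the key pair computation
  have pairkey : ∀ k : Fin n, k ≠ i → ((σ i : ℕ) ≤ i' ∧ (σ k : ℕ) ≤ i') →
      F1 q h σ A i' i k * F1 q h σ A i' k i = F1 q h σ a i' i k * F1 q h σ a i' k i := by
    intro k hk hσ
    have hcik : (i ≠ k ∧ (σ i : ℕ) ≤ i' ∧ (σ k : ℕ) ≤ i') := ⟨fun e => hk e.symm, hσ⟩
    have hcki : (k ≠ i ∧ (σ k : ℕ) ≤ i' ∧ (σ i : ℕ) ≤ i') := ⟨hk, hσ.2, hσ.1⟩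
    have hr0 : a i / a k ≠ 0 := div_ne_zero (ha i) (ha k)
    have hs : a k / a i = (a i / a k)⁻¹ := by rw [inv_div]
    have eAik : A i / A k = q * (a i / a k) := by rw [hAi, hAo k hk, mul_div_assoc]
    have eAki : A k / A i = (a k / a i) / q := by
      rw [hAi, hAo k hk, div_mul_eq_div_div_swap]
    have hfa1 := hFa i k
    rw [F1, if_pos hcik, div_ne_zero_iff, mul_ne_zero_iff, mul_ne_zero_iff] at hfa1
    have hfa2 := hFa k i
    rw [F1, if_pos hcki, div_ne_zero_iff, mul_ne_zero_iff, mul_ne_zero_iff] at hfa2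
    have hdA1 := hdA i k (fun e => hk e.symm) (lt_of_le_of_lt hσ.1 hi'') (lt_of_le_of_lt hσ.2 hi'')
    have hdA2 := hdA k i hk (lt_of_le_of_lt hσ.2 hi'') (lt_of_le_of_lt hσ.1 hi'')
    rw [eAik] at hdA1
    rw [eAki, hs] at hdA2
    rw [hs] at hfa2
    rw [F1, F1, F1, F1, if_pos hcik, if_pos hcki, if_pos hcik, if_pos hcki, eAik, eAki, hs]
    exact pair_eq hq2 hq0 hh0 hr0 rfl hdA1.1 hdA1.2 hdA2.1 hdA2.2
      hfa1.1.1 hfa1.1.2 hfa1.2.1 hfa1.2.2 hfa2.1.1 hfa2.1.2 hfa2.2.1 hfa2.2.2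
  -- ratio * swapped ratio = 1
  have hswap : ∀ j k : Fin n,
      (F1 q h σ A i' j k / F1 q h σ a i' j k) * (F1 q h σ A i' k j / F1 q h σ a i' k j) = 1 := by
    intro j k
    by_cases hjk : j = k
    · subst hjk; simp only [F1_diag]; norm_num
    by_cases hσ : (σ j : ℕ) ≤ i' ∧ (σ k : ℕ) ≤ i'
    · have hprod : F1 q h σ A i' j k * F1 q h σ A i' k j =
          F1 q h σ a i' j k * F1 q h σ a i' k j := by
        by_cases hji : j = i
        · subst hji; exact pairkey k (fun e => hjk e.symm) hσ
        by_cases hki : k = i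
        · subst hki
          have := pairkey j hji ⟨hσ.2, hσ.1⟩
          linear_combination this
        · have e1 : A j / A k = a j / a k := by rw [hAo j hji, hAo k hki]
          have e2 : A k / A j = a k / a j := by rw [hAo j hji, hAo k hki]
          rw [F1, F1, F1, F1, e1, e2]
      rw [div_mul_div_comm, hprod, div_self (mul_ne_zero (hFa j k) (hFa k j))]
    · have c1 : ¬(j ≠ k ∧ (σ j : ℕ) ≤ i' ∧ (σ k : ℕ) ≤ i') := fun hc => hσ hc.2
      have c2 : ¬(k ≠ j ∧ (σ k : ℕ) ≤ i' ∧ (σ j : ℕ) ≤ i') := fun hc => hσ ⟨hc.2.2, hc.2.1⟩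
      simp only [F1, if_neg c1, if_neg c2]; norm_num
  calc (∏ j : Fin n, ∏ k : Fin n, F1 q h σ A i' j k)
      = ∏ p : Fin n × Fin n, F1 q h σ A i' p.1 p.2 := by
        rw [← Finset.univ_product_univ, Finset.prod_product']
    _ = ∏ p : Fin n × Fin n,
          ((F1 q h σ A i' p.1 p.2 / F1 q h σ a i' p.1 p.2) * F1 q h σ a i' p.1 p.2) := by
        refine Finset.prod_congr rfl fun p _ => ?_
        rw [div_mul_cancel₀ _ (hFa p.1 p.2)]
    _ = (∏ p : Fin n × Fin n, (F1 q h σ A i' p.1 p.2 / F1 q h σ a i' p.1 p.2)) *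
          ∏ p : Fin n × Fin n, F1 q h σ a i' p.1 p.2 := Finset.prod_mul_distrib
    _ = ∏ j : Fin n, ∏ k : Fin n, F1 q h σ a i' j k := by
        rw [Finset.prod_involution (fun p _ => (p.2, p.1)) (fun p _ => hswap p.1 p.2)
          (fun p _ hne heq => absurd (by
            have h21 : p.2 = p.1 := congrArg Prod.fst heq
            rw [← h21, F1_diag, F1_diag, div_one]) hne)
          (fun p _ => Finset.mem_univ _) (fun p _ => rfl), one_mul,
          ← Finset.univ_product_univ, Finset.prod_product']

set_option maxHeartbeats 1000000 in
lemma claimB {m n : ℕ} (q h : ℂ) (σ : Fin n → Fin m) (a A : Fin n → ℂ) (i : Fin n)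
    (hq2 : ‖q‖ < 1) (hq0 : q ≠ 0) (hh0 : h ≠ 0) (ha : ∀ j, a j ≠ 0)
    (hAi : A i = q * a i) (hAo : ∀ j, j ≠ i → A j = a j)
    (hd2a : ∀ k l : Fin n, σ k < σ l → Phi q (h⁻¹ * (a k / a l)) ≠ 0)
    (hd2A : ∀ k l : Fin n, σ k < σ l → Phi q (h⁻¹ * (A k / A l)) ≠ 0)
    (hden3 : ∀ j, σ j < σ i → 1 - a j / (q * h * a i) ≠ 0)
    (hden4 : ∀ j, σ i < σ j → 1 - q * (a i / a j) ≠ 0) :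
    (∏ k : Fin n, ∏ l : Fin n, F2 q h σ A k l) =
      ((∏ j : Fin n, if σ i < σ j then (1 - h⁻¹ * (a i / a j)) / (1 - q * (a i / a j)) else 1) *
        (∏ j : Fin n, if σ j < σ i then (1 - a j / a i) / (1 - a j / (q * h * a i)) else 1)) *
        ∏ k : Fin n, ∏ l : Fin n, F2 q h σ a k l := by
  have hpt : ∀ k l : Fin n, F2 q h σ A k l =
      (if k = i then (if σ i < σ l then (1 - h⁻¹ * (a i / a l)) / (1 - q * (a i / a l)) else 1)
        else 1) *
      ((if l = i then (if σ k < σ i then (1 - a k / a i) / (1 - a k / (q * h * a i)) else 1)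
        else 1) * F2 q h σ a k l) := by
    intro k l
    by_cases hk : k = i
    · subst hk
      by_cases hl : l = k
      · subst hl
        simp [F2]
      · rw [if_pos rfl, if_neg hl]
        by_cases hσ : σ k < σ l
        · have eAkl : A k / A l = q * (a k / a l) := by rw [hAi, hAo l hl, mul_div_assoc]
          simp only [F2, if_pos hσ]
          rw [eAkl, one_mul]
          exact G1 hq2 (hd2a k l hσ) (hden4 l hσ)
        · rw [F2, F2, if_neg hσ, if_neg hσ, if_neg hσ]; norm_num
    · rw [if_neg hk]
      by_cases hl : l = i
      · subst hl
        rw [if_pos rfl]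
        by_cases hσ : σ k < σ l
        · have eAkl : A k / A l = (a k / a l) / q := by
            rw [hAi, hAo k hk, div_mul_eq_div_div_swap]
          have e : h⁻¹ * (a k / a l / q) = a k / (q * h * a l) := by
            field_simp
          have hd3 : 1 - h⁻¹ * (a k / a l / q) ≠ 0 := by rw [e]; exact hden3 k hσ
          have hdA' := hd2A k l hσ
          rw [eAkl] at hdA'
          simp only [F2, if_pos hσ]
          rw [eAkl, one_mul, G2 hq2 hq0 (hd2a k l hσ) hd3, e]
        · rw [F2, F2, if_neg hσ, if_neg hσ, if_neg hσ]; norm_num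
      · rw [if_neg hl]
        have e1 : A k / A l = a k / a l := by rw [hAo k hk, hAo l hl]
        rw [F2, F2, e1, one_mul, one_mul]
  calc (∏ k : Fin n, ∏ l : Fin n, F2 q h σ A k l)
      = ∏ k : Fin n, ∏ l : Fin n,
          ((if k = i then
              (if σ i < σ l then (1 - h⁻¹ * (a i / a l)) / (1 - q * (a i / a l)) else 1) else 1) *
          ((if l = i then
              (if σ k < σ i then (1 - a k / a i) / (1 - a k / (q * h * a i)) else 1) else 1) *
            F2 q h σ a k l)) :=
        Finset.prod_congr rfl fun k _ => Finset.prod_congr rfl fun l _ => hpt k l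
    _ = ((∏ j : Fin n, if σ i < σ j then (1 - h⁻¹ * (a i / a j)) / (1 - q * (a i / a j)) else 1) *
          (∏ j : Fin n, if σ j < σ i then (1 - a j / a i) / (1 - a j / (q * h * a i)) else 1)) *
          ∏ k : Fin n, ∏ l : Fin n, F2 q h σ a k l := by
        simp only [Finset.prod_mul_distrib]
        have e1 : (∏ k : Fin n, ∏ l : Fin n, (if k = i then
            (if σ i < σ l then (1 - h⁻¹ * (a i / a l)) / (1 - q * (a i / a l)) else 1) else 1)) =
            ∏ j : Fin n, if σ i < σ j then (1 - h⁻¹ * (a i / a j)) / (1 - q * (a i / a j)) else 1 := by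
          rw [Finset.prod_eq_single_of_mem i (Finset.mem_univ i)
            (fun b _ hb => Finset.prod_eq_one fun l _ => if_neg hb)]
          exact Finset.prod_congr rfl fun l _ => if_pos rfl
        have e2 : (∏ k : Fin n, ∏ l : Fin n, (if l = i then
            (if σ k < σ i then (1 - a k / a i) / (1 - a k / (q * h * a i)) else 1) else 1)) =
            ∏ j : Fin n, if σ j < σ i then (1 - a j / a i) / (1 - a j / (q * h * a i)) else 1 := by
          refine Finset.prod_congr rfl fun k _ => ?_
          rw [Finset.prod_eq_single_of_mem i (Finset.mem_univ i) (fun b _ hb => if_neg hb),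
            if_pos rfl]
        rw [e1, e2, ← mul_assoc]

/-- The q-shift transformation `T_{a_i}(Φ_f)/Φ_f` in the separated case. -/
theorem PhiSep_qshift {m n : ℕ} (hm : 0 < m) (hn : 0 < n) (σ : Fin n → Fin m)
    (q h : ℂ) (a : Fin n → ℂ) (i : Fin n)
    (hq0 : q ≠ 0) (hh0 : h ≠ 0) (ha : ∀ j, a j ≠ 0)
    (hq1 : 0 < ‖q‖) (hq2 : ‖q‖ < 1)
    (hPhi : PhiSep q h σ a ≠ 0)
    (hden1 : ∀ A ∈ ({a, Function.update a i (q * a i)} : Set (Fin n → ℂ)),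
      ∀ j k : Fin n, j ≠ k → (σ j : ℕ) < m - 1 → (σ k : ℕ) < m - 1 →
        Phi q (h⁻¹ * (A j / A k)) ≠ 0 ∧ Phi q (q * h * (A j / A k)) ≠ 0)
    (hden2 : ∀ A ∈ ({a, Function.update a i (q * a i)} : Set (Fin n → ℂ)),
      ∀ k l : Fin n, σ k < σ l → Phi q (h⁻¹ * (A k / A l)) ≠ 0)
    (hden3 : ∀ j, σ j < σ i → 1 - a j / (q * h * a i) ≠ 0)
    (hden4 : ∀ j, σ i < σ j → 1 - q * (a i / a j) ≠ 0) :
    PhiSep q h σ (Function.update a i (q * a i)) / PhiSep q h σ a =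
      (∏ j : Fin n, if σ j < σ i then (1 - a j / a i) / (1 - a j / (q * h * a i)) else 1) *
        ∏ j : Fin n, if σ i < σ j then (1 - h⁻¹ * (a i / a j)) / (1 - q * (a i / a j)) else 1 := by
    classical
  set A := Function.update a i (q * a i) with hA
  have hAi : A i = q * a i := Function.update_self i (q * a i) a
  have hAo : ∀ j, j ≠ i → A j = a j := fun j hj => Function.update_of_ne hj _ _
  have hamem : a ∈ ({a, A} : Set (Fin n → ℂ)) := Set.mem_insert _ _
  have hAmem : A ∈ ({a, A} : Set (Fin n → ℂ)) := Set.mem_insert_of_mem _ rfl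
  rw [PhiSep_eq] at hPhi
  obtain ⟨hP1, hP2⟩ := mul_ne_zero_iff.mp hPhi
  have hFa : ∀ i' ∈ Finset.range (m - 1), ∀ j k : Fin n, F1 q h σ a i' j k ≠ 0 := by
    intro i' hi' j k
    exact Finset.prod_ne_zero_iff.mp (Finset.prod_ne_zero_iff.mp
      (Finset.prod_ne_zero_iff.mp hP1 i' hi') j (Finset.mem_univ j)) k (Finset.mem_univ k)
  have hcA : (∏ i' ∈ Finset.range (m - 1), ∏ j : Fin n, ∏ k : Fin n, F1 q h σ A i' j k) =
      ∏ i' ∈ Finset.range (m - 1), ∏ j : Fin n, ∏ k : Fin n, F1 q h σ a i' j k :=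
    Finset.prod_congr rfl fun i' hi' => claimA q h σ a A i hq2 hq0 hh0 ha hAi hAo i' hi'
      (hFa i' hi') (fun j k hjk h1 h2 => hden1 A hAmem j k hjk h1 h2)
  have hcB := claimB q h σ a A i hq2 hq0 hh0 ha hAi hAo
    (fun k l hkl => hden2 a hamem k l hkl) (fun k l hkl => hden2 A hAmem k l hkl) hden3 hden4
  rw [PhiSep_eq, PhiSep_eq, hcA, hcB, div_eq_iff hPhi]
  ring
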